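/- There exists a triangulation of the punctured (n,∞)-gon P_{n,∞} that contains no puncture edge, i.e., no tagged edge with equal endpoints. -/

import Mathlib

/-!
STATEMENT 8: There exists a triangulation of the punctured `(n,∞)`-gon `P_{n,∞}`
containing no puncture edge (no tagged edge with equal endpoints).  Lines are indexed
by `Fin (n+1)`, covering all `n ≥ 1`.
-/

namespace PuncturedGon

/-- An (unconstrained) edge datum of the punctured `(n+1,∞)`-gon. -/
structure Edge (n : ℕ) where
  p : Fin (n + 1) × ℤ
  q : Fin (n + 1) × ℤ
  sgn : ℤ

/-- `E` is a tagged edge: `q ≠ (p₁, p₂ + 1)`, the sign is `±1`, and the sign is `+1`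
whenever the two endpoints are distinct. -/
def IsTagged {n : ℕ} (E : Edge n) : Prop :=
  E.q ≠ (E.p.1, E.p.2 + 1) ∧ (E.sgn = 1 ∨ E.sgn = -1) ∧ (E.p ≠ E.q → E.sgn = 1)

/-- `σ(a) = 1/2 + a/(2(1+|a|)) ∈ (0,1)`. -/
noncomputable def sig (a : ℤ) : ℝ := 1 / 2 + (a : ℝ) / (2 * (1 + |(a : ℝ)|))

/-- The embedding of the marked points into the circle `ℝ/ℤ`
(the `h`-th line, `h : Fin (n+1)`, occupies the arc `[h/(n+1), (h+1)/(n+1)]`). -/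
noncomputable def theta (n : ℕ) (p : Fin (n + 1) × ℤ) : ℝ :=
  ((p.1.val : ℝ) + sig p.2) / (n + 1)

/-- `(x, y)` is a lift of the edge `E` (with distinct endpoints): `x ≡ θ(E.p)` and
`y ≡ θ(E.q)` modulo `1`, with `y ∈ (x, x + 1)`. -/
def IsLift {n : ℕ} (E : Edge n) (x y : ℝ) : Prop :=
  (∃ k : ℤ, x = theta n E.p + k) ∧ (∃ k : ℤ, y = theta n E.q + k) ∧ x < y ∧ y < x + 1

/-- `E` crosses `F`. -/
def Crosses {n : ℕ} (E F : Edge n) : Prop :=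
  (E.p ≠ E.q ∧ F.p ≠ F.q ∧ ∃ x₁ y₁ x₂ y₂ : ℝ,
    IsLift E x₁ y₁ ∧ IsLift F x₂ y₂ ∧
    ((x₁ < x₂ ∧ x₂ < y₁ ∧ y₁ < y₂) ∨ (x₂ < x₁ ∧ x₁ < y₂ ∧ y₂ < y₁))) ∨
  (E.p ≠ E.q ∧ F.p = F.q ∧ ∃ x y t : ℝ,
    IsLift E x y ∧ (∃ k : ℤ, t = theta n F.p + k) ∧ x < t ∧ t < y) ∨
  (E.p = E.q ∧ F.p ≠ F.q ∧ ∃ x y t : ℝ,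
    IsLift F x y ∧ (∃ k : ℤ, t = theta n E.p + k) ∧ x < t ∧ t < y) ∨
  (E.p = E.q ∧ F.p = F.q ∧ E.p ≠ F.p ∧ E.sgn ≠ F.sgn)

/-- A set of edges is pairwise non-crossing. -/
def PairwiseNoncrossing {n : ℕ} (T : Set (Edge n)) : Prop :=
  ∀ E ∈ T, ∀ F ∈ T, ¬ Crosses E F

/-- A triangulation of `P_{n+1,∞}`: a maximal set of pairwise non-crossing tagged
edges. -/
def IsTriangulation {n : ℕ} (T : Set (Edge n)) : Prop :=
  (∀ E ∈ T, IsTagged E) ∧ PairwiseNoncrossing T ∧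
    ∀ E : Edge n, IsTagged E → E ∉ T → ∃ F ∈ T, Crosses E F

end PuncturedGon

namespace PuncturedGon

lemma sig_pos (a : ℤ) : 0 < sig a := by
  have h0 : (0:ℝ) < 2 * (1 + |(a:ℝ)|) := by positivity
  have h1 : -(1 + |(a:ℝ)|) < (a:ℝ) := by
    have := neg_abs_le (a:ℝ); linarith
  rw [sig]
  have : -(1/2 : ℝ) < (a:ℝ) / (2 * (1 + |(a:ℝ)|)) := by
    rw [lt_div_iff₀ h0]; linarith
  linarith

lemma sig_lt_one (a : ℤ) : sig a < 1 := by
  have h0 : (0:ℝ) < 2 * (1 + |(a:ℝ)|) := by positivity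
  have h1 : (a:ℝ) < 1 + |(a:ℝ)| := by
    have := le_abs_self (a:ℝ); linarith
  rw [sig]
  have : (a:ℝ) / (2 * (1 + |(a:ℝ)|)) < 1/2 := by
    rw [div_lt_iff₀ h0]; linarith
  linarith

lemma sig_lt_sig {a b : ℤ} (h : a < b) : sig a < sig b := by
  have hx : ((a:ℝ)) < (b:ℝ) := by exact_mod_cast h
  have h0 : (0:ℝ) < 2 * (1 + |(a:ℝ)|) := by positivity
  have h1 : (0:ℝ) < 2 * (1 + |(b:ℝ)|) := by positivity
  rw [sig, sig]
  have : (a:ℝ) / (2 * (1 + |(a:ℝ)|)) < (b:ℝ) / (2 * (1 + |(b:ℝ)|)) := by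
    rw [div_lt_div_iff₀ h0 h1]
    rcases abs_cases (a:ℝ) with ⟨ea, sa⟩ | ⟨ea, sa⟩ <;>
      rcases abs_cases (b:ℝ) with ⟨eb, sb⟩ | ⟨eb, sb⟩ <;>
      rw [ea, eb] <;> nlinarith
  linarith

lemma sig_lt_sig_iff {a b : ℤ} : sig a < sig b ↔ a < b := by
  refine ⟨fun h => ?_, sig_lt_sig⟩
  by_contra hab
  push_neg at hab
  rcases eq_or_lt_of_le hab with rfl | hlt
  · exact lt_irrefl _ h
  · exact absurd (sig_lt_sig hlt) (by linarith)

/-- The chord from `(h,-m)` to `(h,m)`. -/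
def chord (n : ℕ) (h : Fin (n+1)) (m : ℤ) : Edge n := ⟨(h, -m), (h, m), 1⟩

lemma theta_eq (n : ℕ) (h : Fin (n+1)) (a : ℤ) :
    theta n (h, a) = ((h.val : ℝ) + sig a) / ((n:ℝ) + 1) := by
  simp [theta]

lemma Npos (n : ℕ) : (0:ℝ) < (n:ℝ) + 1 := by positivity

/-- Lifts of an edge with `0 < θq - θp < 1` have the same shift on both ends. -/
lemma lift_shape {n : ℕ} {E : Edge n} (h0 : 0 < theta n E.q - theta n E.p)
    (h1 : theta n E.q - theta n E.p < 1) {x y : ℝ} (h : IsLift E x y) :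
    ∃ k : ℤ, x = theta n E.p + k ∧ y = theta n E.q + k := by
  obtain ⟨⟨k₁, hx⟩, ⟨k₂, hy⟩, hxy, hyx⟩ := h
  have hd : k₂ = k₁ := by
    have e1 : y - x = theta n E.q - theta n E.p + ((k₂ : ℝ) - k₁) := by
      rw [hx, hy]; ring
    have r1 : (-1:ℝ) < (k₂:ℝ) - k₁ := by linarith
    have r2 : ((k₂:ℝ)) - k₁ < 1 := by linarith
    have i1 : (-1:ℤ) < k₂ - k₁ := by exact_mod_cast (by push_cast; linarith : (-1:ℝ) < ((k₂ - k₁ : ℤ):ℝ))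
    have i2 : k₂ - k₁ < (1:ℤ) := by exact_mod_cast (by push_cast; linarith : ((k₂ - k₁ : ℤ):ℝ) < 1)
    omega
  exact ⟨k₁, hx, by rw [hy, hd]⟩

lemma chord_theta_lt {n : ℕ} (h : Fin (n+1)) {m : ℤ} (hm : 1 ≤ m) :
    0 < theta n (chord n h m).q - theta n (chord n h m).p ∧
    theta n (chord n h m).q - theta n (chord n h m).p < 1 := by
  have hs : sig (-m) < sig m := sig_lt_sig (by omega)
  have h1 : sig m < 1 := sig_lt_one m
  have h2 : 0 < sig (-m) := sig_pos (-m)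
  have hN := Npos n
  have he : theta n (chord n h m).q - theta n (chord n h m).p
      = (sig m - sig (-m)) / ((n:ℝ) + 1) := by
    simp only [chord, theta_eq]; ring
  rw [he]
  constructor
  · exact div_pos (by linarith) hN
  · rw [div_lt_one hN]
    have : (1:ℝ) ≤ (n:ℝ) + 1 := by linarith [Nat.cast_nonneg (α := ℝ) n]
    linarith

/-- Key interleaving impossibility for two chords. -/
lemma chord_key {n : ℕ} (h k : Fin (n+1)) (m l k₁ k₂ : ℤ) (hm : 1 ≤ m) (hl : 1 ≤ l)
    (h1 : theta n (h, -m) + (k₁:ℝ) < theta n (k, -l) + k₂)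
    (h2 : theta n (k, -l) + (k₂:ℝ) < theta n (h, m) + k₁)
    (h3 : theta n (h, m) + (k₁:ℝ) < theta n (k, l) + k₂) : False := by
  have hN := Npos n
  set A := sig (-m) with hA
  set B := sig m with hB
  set C := sig (-l) with hC
  set D := sig l with hD
  have bA0 := sig_pos (-m); have bA1 := sig_lt_one (-m)
  have bB0 := sig_pos m; have bB1 := sig_lt_one m
  have bC0 := sig_pos (-l); have bC1 := sig_lt_one (-l)
  have bD0 := sig_pos l; have bD1 := sig_lt_one l
  -- clear denominators
  have e : ∀ (f : Fin (n+1)) (a : ℤ) (j : ℤ),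
      theta n (f, a) + (j:ℝ) = ((f.val:ℝ) + sig a + ((n:ℝ)+1) * j) / ((n:ℝ)+1) := by
    intro f a j
    rw [theta_eq]
    field_simp
  rw [e, e, div_lt_div_iff₀ hN hN] at h1 h2 h3
  have H1 : (h.val:ℝ) + A + ((n:ℝ)+1) * k₁ < (k.val:ℝ) + C + ((n:ℝ)+1) * k₂ := by nlinarith
  have H2 : (k.val:ℝ) + C + ((n:ℝ)+1) * k₂ < (h.val:ℝ) + B + ((n:ℝ)+1) * k₁ := by nlinarith
  have H3 : (h.val:ℝ) + B + ((n:ℝ)+1) * k₁ < (k.val:ℝ) + D + ((n:ℝ)+1) * k₂ := by nlinarith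
  set c : ℤ := (k.val : ℤ) - (h.val : ℤ) + ((n:ℤ)+1) * (k₂ - k₁) with hc
  have hcR : (c:ℝ) = (k.val:ℝ) - (h.val:ℝ) + ((n:ℝ)+1) * ((k₂:ℝ) - k₁) := by
    push_cast [hc]; ring
  have g1 : A - C < (c:ℝ) := by rw [hcR]; linarith
  have g2 : (c:ℝ) < B - C := by rw [hcR]; linarith
  have g3 : B - D < (c:ℝ) := by rw [hcR]; linarith
  have c0 : c = 0 := by
    have r1 : (-1:ℝ) < (c:ℝ) := by linarith
    have r2 : (c:ℝ) < 1 := by linarith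
    have i1 : (-1:ℤ) < c := by exact_mod_cast r1
    have i2 : c < (1:ℤ) := by exact_mod_cast r2
    omega
  rw [c0] at g1 g3
  push_cast at g1 g3
  have q1 : A < C := by linarith
  have q2 : B < D := by linarith
  have w1 : -m < -l := sig_lt_sig_iff.mp q1
  have w2 : m < l := sig_lt_sig_iff.mp q2
  omega

lemma chord_not_crosses {n : ℕ} (h k : Fin (n+1)) (m l : ℤ) (hm : 1 ≤ m) (hl : 1 ≤ l) :
    ¬ Crosses (chord n h m) (chord n k l) := by
  have hp : (chord n h m).p ≠ (chord n h m).q := by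
    simp only [chord, ne_eq, Prod.mk.injEq]
    intro ⟨_, h2⟩; omega
  have hp' : (chord n k l).p ≠ (chord n k l).q := by
    simp only [chord, ne_eq, Prod.mk.injEq]
    intro ⟨_, h2⟩; omega
  intro H
  rcases H with ⟨_, _, x₁, y₁, x₂, y₂, L1, L2, hd⟩ | ⟨_, he, _⟩ | ⟨he, _, _⟩ | ⟨he, _⟩
  · obtain ⟨j₁, hx₁, hy₁⟩ := lift_shape (chord_theta_lt h hm).1 (chord_theta_lt h hm).2 L1
    obtain ⟨j₂, hx₂, hy₂⟩ := lift_shape (chord_theta_lt k hl).1 (chord_theta_lt k hl).2 L2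
    simp only [chord] at hx₁ hy₁ hx₂ hy₂
    rcases hd with ⟨d1, d2, d3⟩ | ⟨d1, d2, d3⟩
    · exact chord_key h k m l j₁ j₂ hm hl (by rw [← hx₁, ← hx₂]; exact d1)
        (by rw [← hx₂, ← hy₁]; exact d2) (by rw [← hy₁, ← hy₂]; exact d3)
    · exact chord_key k h l m j₂ j₁ hl hm (by rw [← hx₂, ← hx₁]; exact d1)
        (by rw [← hx₁, ← hy₂]; exact d2) (by rw [← hy₂, ← hy₁]; exact d3)
  · exact hp' he
  · exact hp he
  · exact hp he


lemma crosses_symm {n : ℕ} {E F : Edge n} (h : Crosses E F) : Crosses F E := by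
  rcases h with ⟨h1, h2, x₁, y₁, x₂, y₂, L1, L2, hd⟩ | ⟨h1, h2, x, y, t, L, ht, h3, h4⟩
    | ⟨h1, h2, x, y, t, L, ht, h3, h4⟩ | ⟨h1, h2, h3, h4⟩
  · exact Or.inl ⟨h2, h1, x₂, y₂, x₁, y₁, L2, L1, hd.symm⟩
  · exact Or.inr (Or.inr (Or.inl ⟨h2, h1, x, y, t, L, ht, h3, h4⟩))
  · exact Or.inr (Or.inl ⟨h2, h1, x, y, t, L, ht, h3, h4⟩)
  · exact Or.inr (Or.inr (Or.inr ⟨h2, h1, Ne.symm h3, Ne.symm h4⟩))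

lemma not_crosses_self {n : ℕ} (E : Edge n) : ¬ Crosses E E := by
  intro H
  rcases H with ⟨h1, h2, x₁, y₁, x₂, y₂, L1, L2, hd⟩ | ⟨h1, h2, _⟩ | ⟨h1, h2, _⟩ | ⟨_, _, h3, _⟩
  · obtain ⟨⟨a₁, hx₁⟩, ⟨b₁, hy₁⟩, hxy₁, hyx₁⟩ := L1
    obtain ⟨⟨a₂, hx₂⟩, ⟨b₂, hy₂⟩, hxy₂, hyx₂⟩ := L2
    have len : ∀ i ∈ ({(a₁,b₁), (a₂,b₂)} : Set (ℤ × ℤ)), True := fun _ _ => trivial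
    have e1 : y₁ - x₁ = theta n E.q - theta n E.p + ((b₁:ℝ) - a₁) := by
      rw [hx₁, hy₁]; ring
    have e2 : y₂ - x₂ = theta n E.q - theta n E.p + ((b₂:ℝ) - a₂) := by
      rw [hx₂, hy₂]; ring
    have dd : (b₂ - a₂ : ℤ) = b₁ - a₁ := by
      have r1 : ((b₂ - a₂ : ℤ):ℝ) - ((b₁ - a₁ : ℤ):ℝ) < 1 := by push_cast; linarith
      have r2 : (-1:ℝ) < ((b₂ - a₂ : ℤ):ℝ) - ((b₁ - a₁ : ℤ):ℝ) := by push_cast; linarith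
      have i1 : (b₂ - a₂ : ℤ) - (b₁ - a₁) < 1 := by exact_mod_cast (by push_cast at r1 ⊢; linarith : ((b₂ - a₂ - (b₁ - a₁) : ℤ):ℝ) < 1)
      have i2 : (-1:ℤ) < (b₂ - a₂ : ℤ) - (b₁ - a₁) := by exact_mod_cast (by push_cast at r2 ⊢; linarith : (-1:ℝ) < ((b₂ - a₂ - (b₁ - a₁) : ℤ):ℝ))
      omega
    have same : y₂ - x₂ = y₁ - x₁ := by
      have ddR : ((b₂:ℝ) - a₂) = ((b₁:ℝ) - a₁) := by exact_mod_cast dd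
      rw [e1, e2, ddR]
    rcases hd with ⟨d1, d2, d3⟩ | ⟨d1, d2, d3⟩
    · have s1 : (0:ℝ) < (a₂:ℝ) - a₁ := by
        have : x₂ - x₁ = (a₂:ℝ) - a₁ := by rw [hx₁, hx₂]; ring
        linarith
      have s2 : (a₂:ℝ) - a₁ < 1 := by
        have : x₂ - x₁ = (a₂:ℝ) - a₁ := by rw [hx₁, hx₂]; ring
        linarith
      have i1 : (0:ℤ) < a₂ - a₁ := by exact_mod_cast (by push_cast; linarith : (0:ℝ) < ((a₂ - a₁:ℤ):ℝ))
      have i2 : (a₂ - a₁:ℤ) < 1 := by exact_mod_cast (by push_cast; linarith : ((a₂ - a₁:ℤ):ℝ) < 1)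
      omega
    · have s1 : (0:ℝ) < (a₁:ℝ) - a₂ := by
        have : x₁ - x₂ = (a₁:ℝ) - a₂ := by rw [hx₁, hx₂]; ring
        linarith
      have s2 : (a₁:ℝ) - a₂ < 1 := by
        have : x₁ - x₂ = (a₁:ℝ) - a₂ := by rw [hx₁, hx₂]; ring
        linarith
      have i1 : (0:ℤ) < a₁ - a₂ := by exact_mod_cast (by push_cast; linarith : (0:ℝ) < ((a₁ - a₂:ℤ):ℝ))
      have i2 : (a₁ - a₂:ℤ) < 1 := by exact_mod_cast (by push_cast; linarith : ((a₁ - a₂:ℤ):ℝ) < 1)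
      omega
  · exact h1 h2
  · exact h2 h1
  · exact h3 rfl

/-- The base family of chords. -/
def Sset (n : ℕ) : Set (Edge n) := {E | ∃ h : Fin (n+1), ∃ m : ℤ, 1 ≤ m ∧ E = chord n h m}

lemma chord_tagged {n : ℕ} (h : Fin (n+1)) {m : ℤ} (hm : 1 ≤ m) : IsTagged (chord n h m) := by
  refine ⟨?_, Or.inl rfl, fun _ => rfl⟩
  simp only [chord, ne_eq, Prod.mk.injEq]
  intro ⟨_, h2⟩; omega

lemma Sset_tagged {n : ℕ} : ∀ E ∈ Sset n, IsTagged E := by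
  rintro E ⟨h, m, hm, rfl⟩; exact chord_tagged h hm

lemma Sset_noncrossing {n : ℕ} : PairwiseNoncrossing (Sset n) := by
  rintro E ⟨h, m, hm, rfl⟩ F ⟨k, l, hl, rfl⟩
  exact chord_not_crosses h k m l hm hl

/-- Every puncture edge crosses some chord of `Sset`. -/
lemma puncture_crosses {n : ℕ} (E : Edge n) (he : E.p = E.q) :
    ∃ F ∈ Sset n, Crosses E F := by
  set h := E.p.1 with hh
  set a := E.p.2 with ha
  set m := |a| + 1 with hm
  have hm1 : (1:ℤ) ≤ m := by have := abs_nonneg a; omega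
  have hN := Npos n
  refine ⟨chord n h m, ⟨h, m, hm1, rfl⟩, ?_⟩
  have hp' : (chord n h m).p ≠ (chord n h m).q := by
    simp only [chord, ne_eq, Prod.mk.injEq]
    intro ⟨_, h2⟩; omega
  have hEp : E.p = (h, a) := by rw [hh, ha]
  obtain ⟨c1, c2⟩ := chord_theta_lt (n := n) h hm1
  simp only [chord] at c1 c2
  have L : IsLift (chord n h m) (theta n (h, -m)) (theta n (h, m)) :=
    ⟨⟨0, by simp [chord]⟩, ⟨0, by simp [chord]⟩, by linarith, by linarith⟩
  refine Or.inr (Or.inr (Or.inl ⟨he, hp',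
    theta n (h, -m), theta n (h, m), theta n (h, a), L, ⟨0, by rw [hEp]; simp⟩, ?_, ?_⟩))
  · rw [theta_eq, theta_eq, div_lt_div_iff₀ hN hN]
    have hs : sig (-m) < sig a := sig_lt_sig (by have := neg_abs_le a; omega)
    nlinarith
  · rw [theta_eq, theta_eq, div_lt_div_iff₀ hN hN]
    have hs : sig a < sig m := sig_lt_sig (by have := le_abs_self a; omega)
    nlinarith


/-- there exists a triangulation of `P_{n+1,∞}` without puncture edges. -/
theorem exists_triangulation_no_puncture_edge (n : ℕ) :
    ∃ T : Set (Edge n), IsTriangulation T ∧ ∀ E ∈ T, E.p ≠ E.q := by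
  set 𝒞 : Set (Set (Edge n)) :=
    {T | Sset n ⊆ T ∧ (∀ E ∈ T, IsTagged E) ∧ PairwiseNoncrossing T} with h𝒞
  have hS : Sset n ∈ 𝒞 := ⟨subset_rfl, Sset_tagged, Sset_noncrossing⟩
  have hchain : ∀ c ⊆ 𝒞, IsChain (· ⊆ ·) c → c.Nonempty → ∃ ub ∈ 𝒞, ∀ s ∈ c, s ⊆ ub := by
    intro c hc hch hne
    refine ⟨⋃₀ c, ⟨?_, ?_, ?_⟩, fun s hs => Set.subset_sUnion_of_mem hs⟩
    · obtain ⟨t, ht⟩ := hne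
      exact (hc ht).1.trans (Set.subset_sUnion_of_mem ht)
    · rintro E ⟨t, ht, hEt⟩
      exact (hc ht).2.1 E hEt
    · rintro E ⟨t, ht, hEt⟩ F ⟨u, hu, hFu⟩
      rcases hch.total ht hu with hsub | hsub
      · exact (hc hu).2.2 E (hsub hEt) F hFu
      · exact (hc ht).2.2 E hEt F (hsub hFu)
  obtain ⟨T, hST, hTmax⟩ := zorn_subset_nonempty 𝒞 hchain (Sset n) hS
  obtain ⟨hT1, hT2, hT3⟩ := hTmax.prop
  refine ⟨T, ⟨hT2, hT3, ?_⟩, ?_⟩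
  · intro E hE hET
    by_contra hno
    push_neg at hno
    have hmem : T ∪ {E} ∈ 𝒞 := by
      refine ⟨hT1.trans Set.subset_union_left, ?_, ?_⟩
      · rintro F (hF | rfl)
        · exact hT2 F hF
        · exact hE
      · rintro A (hA | rfl) B (hB | rfl)
        · exact hT3 A hA B hB
        · intro hcr; exact hno A hA (crosses_symm hcr)
        · exact hno B hB
        · exact not_crosses_self _
    have hsub : T ∪ {E} ⊆ T := hTmax.2 hmem Set.subset_union_left
    exact hET (hsub (Or.inr rfl))
  · intro E hE
    intro heq
    obtain ⟨F, hF, hcr⟩ := puncture_crosses E heq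
    exact hT3 E hE F (hT1 hF) hcr



end PuncturedGon
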